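/- For every even integer n ≥ 4, the permutation-graph binary constraint system on the complete graph with n vertices has no classical solution over {+1, −1}. -/

import Mathlib

/-- Four pairwise distinct vertices. -/
def Dist4 {n : ℕ} (u v s t : Fin n) : Prop :=
  u ≠ v ∧ u ≠ s ∧ u ≠ t ∧ v ≠ s ∧ v ≠ t ∧ s ≠ t

/-- The permutation-graph BCS on the complete graph with `n` vertices, with a
classical (sign-valued) assignment `a, x, y, z, b, c`. -/
def PermBCSSol (n : ℕ) (a : Fin n → ℤ) (x y z : Fin n → Fin n → ℤ)
    (b c : Fin n → Fin n → Fin n → Fin n → ℤ) : Prop :=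
  (∀ u v, u ≠ v → a u * a v * y u v = 1) ∧
  (∀ u v, u ≠ v → x u v * y u v * z u v = 1) ∧
  (∀ u v s t, Dist4 u v s t → x u v * x s t * b u v s t = 1) ∧
  (∀ u v s t, Dist4 u v s t → x u v * z s t * c u v s t = 1) ∧
  (∀ u v s t, Dist4 u v s t → b u v s t * b v s u t * b s u v t = 1) ∧
  (∀ u v s t, Dist4 u v s t → c u v s t * c v s u t * c s u v t = 1) ∧
  (∏ v, a v = -1)

private lemma sgmul {p q : ℤ} (hp : p = 1 ∨ p = -1) (hq : q = 1 ∨ q = -1) :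
    p * q = 1 ∨ p * q = -1 := by
  rcases hp with h | h <;> rcases hq with h' | h' <;> simp [h, h']

private lemma sg {p q : ℤ} (hp : p = 1 ∨ p = -1) (hq : q = 1 ∨ q = -1)
    (h : p * q = 1) : q = p := by
  rcases hp with h1 | h1 <;> rcases hq with h2 | h2 <;> subst h1 <;> subst h2 <;> omega

private lemma key {n : ℕ} {a : Fin n → ℤ} {x y z : Fin n → Fin n → ℤ}
    {b c : Fin n → Fin n → Fin n → Fin n → ℤ}
    (ha : ∀ v, a v = 1 ∨ a v = -1)
    (hx : ∀ u v, x u v = 1 ∨ x u v = -1)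
    (hy : ∀ u v, y u v = 1 ∨ y u v = -1)
    (hz : ∀ u v, z u v = 1 ∨ z u v = -1)
    (hb : ∀ u v s t, b u v s t = 1 ∨ b u v s t = -1)
    (hc : ∀ u v s t, c u v s t = 1 ∨ c u v s t = -1)
    (sol : PermBCSSol n a x y z b c)
    {u v s t : Fin n} (hD : Dist4 u v s t) :
    a u * a v * a s * a t = 1 := by
  obtain ⟨h1, h2, h3, h4, h5, h6, h7⟩ := sol
  obtain ⟨huv, hus, hut, hvs, hvt, hst⟩ := hD
  have hD : Dist4 u v s t := ⟨huv, hus, hut, hvs, hvt, hst⟩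
  have hD2 : Dist4 v s u t := ⟨hvs, huv.symm, hvt, hus.symm, hst, hut⟩
  have hD3 : Dist4 s u v t := ⟨hus.symm, hvs.symm, hst, huv, hut, hvt⟩
  have y1 : y s t = a s * a t := sg (sgmul (ha s) (ha t)) (hy s t) (h1 s t hst)
  have y2 : y u t = a u * a t := sg (sgmul (ha u) (ha t)) (hy u t) (h1 u t hut)
  have y3 : y v t = a v * a t := sg (sgmul (ha v) (ha t)) (hy v t) (h1 v t hvt)
  have z1 : z s t = x s t * y s t := sg (sgmul (hx s t) (hy s t)) (hz s t) (h2 s t hst)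
  have z2 : z u t = x u t * y u t := sg (sgmul (hx u t) (hy u t)) (hz u t) (h2 u t hut)
  have z3 : z v t = x v t * y v t := sg (sgmul (hx v t) (hy v t)) (hz v t) (h2 v t hvt)
  have b1 : b u v s t = x u v * x s t :=
    sg (sgmul (hx u v) (hx s t)) (hb u v s t) (h3 u v s t hD)
  have b2 : b v s u t = x v s * x u t :=
    sg (sgmul (hx v s) (hx u t)) (hb v s u t) (h3 v s u t hD2)
  have b3 : b s u v t = x s u * x v t :=
    sg (sgmul (hx s u) (hx v t)) (hb s u v t) (h3 s u v t hD3)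
  have c1 : c u v s t = x u v * z s t :=
    sg (sgmul (hx u v) (hz s t)) (hc u v s t) (h4 u v s t hD)
  have c2 : c v s u t = x v s * z u t :=
    sg (sgmul (hx v s) (hz u t)) (hc v s u t) (h4 v s u t hD2)
  have c3 : c s u v t = x s u * z v t :=
    sg (sgmul (hx s u) (hz v t)) (hc s u v t) (h4 s u v t hD3)
  have eq5 := h5 u v s t hD
  rw [b1, b2, b3] at eq5
  have eq6 := h6 u v s t hD
  rw [c1, c2, c3, z1, z2, z3, y1, y2, y3] at eq6
  have hq : a t * a t = 1 := by rcases ha t with h | h <;> rw [h] <;> norm_num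
  linear_combination eq6 - (a u * a v * a s * a t) * (a t * a t) * eq5 -
    (a u * a v * a s * a t) * hq

theorem stmt10 (n : ℕ) (hn : 4 ≤ n) (heven : Even n) :
    ¬ ∃ (a : Fin n → ℤ) (x y z : Fin n → Fin n → ℤ)
        (b c : Fin n → Fin n → Fin n → Fin n → ℤ),
      (∀ v, a v = 1 ∨ a v = -1) ∧
      (∀ u v, x u v = 1 ∨ x u v = -1) ∧
      (∀ u v, y u v = 1 ∨ y u v = -1) ∧
      (∀ u v, z u v = 1 ∨ z u v = -1) ∧
      (∀ u v s t, b u v s t = 1 ∨ b u v s t = -1) ∧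
      (∀ u v s t, c u v s t = 1 ∨ c u v s t = -1) ∧
      PermBCSSol n a x y z b c := by
  rintro ⟨a, x, y, z, b, c, ha, hx, hy, hz, hb, hc, sol⟩
  have hkey : ∀ {u v s t : Fin n}, Dist4 u v s t → a u * a v * a s * a t = 1 :=
    fun hD => key ha hx hy hz hb hc sol hD
  have h7 : ∏ v, a v = -1 := sol.2.2.2.2.2.2
  by_cases h4 : n = 4
  · subst h4
    have hD : Dist4 (0 : Fin 4) 1 2 3 := by unfold Dist4; decide
    have := hkey hD
    rw [Fin.prod_univ_four] at h7
    omega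
  · have hn5 : 5 ≤ n := by omega
    -- all a's are equal
    have hall : ∀ v w : Fin n, a v = a w := by
      intro v w
      by_cases hvw : v = w
      · rw [hvw]
      · have hcard2 : ({v, w} : Finset (Fin n)).card ≤ 2 := by
          apply le_trans (Finset.card_insert_le _ _); simp
        have hsd : (Finset.univ \ ({v, w} : Finset (Fin n))).card =
            Finset.univ.card - ({v, w} : Finset (Fin n)).card :=
          Finset.card_sdiff_of_subset (Finset.subset_univ _)
        have hcardu : (Finset.univ : Finset (Fin n)).card = n := by simp
        have h3le : 3 ≤ (Finset.univ \ ({v, w} : Finset (Fin n))).card := by omega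
        obtain ⟨T, hTsub, hT3⟩ := Finset.exists_subset_card_eq h3le
        obtain ⟨p, q, r, hpq, hpr, hqr, hTeq⟩ := Finset.card_eq_three.mp hT3
        have hmem : ∀ e ∈ T, e ≠ v ∧ e ≠ w := by
          intro e he
          have := hTsub he
          simp only [Finset.mem_sdiff, Finset.mem_insert, Finset.mem_singleton] at this
          exact ⟨fun h => this.2 (Or.inl h), fun h => this.2 (Or.inr h)⟩
        have hp := hmem p (by rw [hTeq]; simp)
        have hq := hmem q (by rw [hTeq]; simp)
        have hr := hmem r (by rw [hTeq]; simp)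
        have e1 : a p * a v * a q * a r = 1 :=
          hkey ⟨hp.1, hpq, hpr, fun h => hq.1 h.symm, fun h => hr.1 h.symm, hqr⟩
        have e2 : a p * a w * a q * a r = 1 :=
          hkey ⟨hp.2, hpq, hpr, fun h => hq.2 h.symm, fun h => hr.2 h.symm, hqr⟩
        have hne : a p * a q * a r ≠ 0 := by
          rcases ha p with h | h <;> rcases ha q with h' | h' <;>
            rcases ha r with h'' | h'' <;> rw [h, h', h''] <;> norm_num
        have heqv : (a p * a q * a r) * a v = (a p * a q * a r) * a w := by
          linear_combination e1 - e2
        exact mul_left_cancel₀ hne heqv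
    have x0 : Fin n := ⟨0, by omega⟩
    have hprod : ∏ v, a v = (a x0) ^ n := by
      rw [Finset.prod_congr rfl (fun v _ => hall v x0), Finset.prod_const,
        Finset.card_univ, Fintype.card_fin]
    rcases ha x0 with h | h
    · rw [hprod, h, one_pow] at h7; omega
    · rw [hprod, h, heven.neg_one_pow] at h7; omega
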